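/- Let V be a finite-dimensional vector space over F₂ = ℤ/2ℤ equipped with a bilinear form (·,·), and let e₁, …, eₙ be a basis of V that is semi-orthonormal, i.e. (eᵢ, eⱼ) = 0 for i > j and (eᵢ, eᵢ) = 1. Then for each i with 1 ≤ i ≤ n−1, the family obtained from e₁, …, eₙ by replacing the pair (eᵢ, eᵢ₊₁) with the pair (eᵢ₊₁, eᵢ + (eᵢ, eᵢ₊₁)·eᵢ₊₁) is again a semi-orthonormal basis of V. -/

import Mathlib

/-- Let `V` be a finite-dimensional vector space over `F₂ = ℤ/2ℤ` with
a bilinear form `B`, and let `e₁, …, eₙ` be a semi-orthonormal basis of `V`, i.e.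
`B(eᵢ, eⱼ) = 0` for `i > j` and `B(eᵢ, eᵢ) = 1`. Then for each `i` with
`1 ≤ i ≤ n − 1`, the family obtained by replacing the pair `(eᵢ, eᵢ₊₁)` with the pair
`(eᵢ₊₁, eᵢ + B(eᵢ, eᵢ₊₁)·eᵢ₊₁)` is again a semi-orthonormal basis of `V`. -/
theorem stmt_10 (V : Type*) [AddCommGroup V] [Module (ZMod 2) V]
    [FiniteDimensional (ZMod 2) V] (n : ℕ)
    (B : V →ₗ[ZMod 2] V →ₗ[ZMod 2] ZMod 2)
    (e : Module.Basis (Fin n) (ZMod 2) V)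
    (horth : ∀ i j : Fin n, j < i → B (e i) (e j) = 0)
    (hnorm : ∀ i : Fin n, B (e i) (e i) = 1)
    (i : ℕ) (hi : i + 1 < n)
    (f : Fin n → V)
    (hf : ∀ j : Fin n, f j =
      if (j : ℕ) = i then e ⟨i + 1, hi⟩
      else if (j : ℕ) = i + 1 then
        e ⟨i, Nat.lt_of_succ_lt hi⟩ +
          B (e ⟨i, Nat.lt_of_succ_lt hi⟩) (e ⟨i + 1, hi⟩) • e ⟨i + 1, hi⟩
      else e j) :
    (∃ b : Module.Basis (Fin n) (ZMod 2) V, ⇑b = f) ∧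
      (∀ j k : Fin n, k < j → B (f j) (f k) = 0) ∧
      (∀ j : Fin n, B (f j) (f j) = 1) := by
  set i0 : Fin n := ⟨i, Nat.lt_of_succ_lt hi⟩ with hi0
  set i1 : Fin n := ⟨i + 1, hi⟩ with hi1
  set c : ZMod 2 := B (e i0) (e i1) with hc
  have hi0v : (i0 : ℕ) = i := rfl
  have hi1v : (i1 : ℕ) = i + 1 := rfl
  have hfi0 : f i0 = e i1 := by rw [hf, if_pos hi0v]
  have hfi1 : f i1 = e i0 + c • e i1 := by rw [hf, if_neg (by omega), if_pos hi1v]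
  have hfother : ∀ j : Fin n, (j : ℕ) ≠ i → (j : ℕ) ≠ i + 1 → f j = e j := by
    intro j h1 h2; rw [hf, if_neg h1, if_neg h2]
  have h01 : B (e i1) (e i0) = 0 := horth i1 i0 (by rw [Fin.lt_def]; omega)
  have two : (2 : ZMod 2) = 0 := rfl
  refine ⟨?_, ?_, ?_⟩
  · have hspan : ⊤ ≤ Submodule.span (ZMod 2) (Set.range f) := by
      rw [← e.span_eq]
      refine Submodule.span_le.2 ?_
      rintro _ ⟨m, rfl⟩
      by_cases h1 : (m : ℕ) = i
      · have hm : m = i0 := Fin.ext h1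
        have : e m = f i1 - c • f i0 := by
          rw [hfi1, hfi0, hm]; abel
        rw [this]
        exact Submodule.sub_mem _ (Submodule.subset_span ⟨i1, rfl⟩)
          (Submodule.smul_mem _ _ (Submodule.subset_span ⟨i0, rfl⟩))
      · by_cases h2 : (m : ℕ) = i + 1
        · have hm : m = i1 := Fin.ext h2
          rw [hm, ← hfi0]
          exact Submodule.subset_span ⟨i0, rfl⟩
        · rw [← hfother m h1 h2]
          exact Submodule.subset_span ⟨m, rfl⟩
    have hcard : Fintype.card (Fin n) = Module.finrank (ZMod 2) V := by
      rw [Module.finrank_eq_card_basis e]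
    exact ⟨basisOfTopLeSpanOfCardEqFinrank f hspan hcard,
      coe_basisOfTopLeSpanOfCardEqFinrank f hspan hcard⟩
  · intro j k hkj
    have hkj' : (k : ℕ) < (j : ℕ) := hkj
    by_cases hj1 : (j : ℕ) = i
    · have hj : j = i0 := Fin.ext hj1
      have hk1 : (k : ℕ) ≠ i := by omega
      have hk2 : (k : ℕ) ≠ i + 1 := by omega
      rw [hj, hfi0, hfother k hk1 hk2]
      exact horth i1 k (by rw [Fin.lt_def]; omega)
    · by_cases hj2 : (j : ℕ) = i + 1
      · have hj : j = i1 := Fin.ext hj2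
        rw [hj, hfi1]
        by_cases hk1 : (k : ℕ) = i
        · have hk : k = i0 := Fin.ext hk1
          rw [hk, hfi0]
          simp only [map_add, map_smul, LinearMap.add_apply, LinearMap.smul_apply,
            smul_eq_mul, hnorm i1, mul_one, ← hc]
          rw [CharTwo.add_self_eq_zero]
        · have hk2 : (k : ℕ) ≠ i + 1 := by omega
          rw [hfother k hk1 hk2]
          simp only [map_add, map_smul, LinearMap.add_apply, LinearMap.smul_apply,
            smul_eq_mul]
          rw [horth i0 k (by rw [Fin.lt_def]; omega),
            horth i1 k (by rw [Fin.lt_def]; omega), mul_zero, add_zero]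
      · rw [hfother j hj1 hj2]
        by_cases hk1 : (k : ℕ) = i
        · have hk : k = i0 := Fin.ext hk1
          rw [hk, hfi0]
          exact horth j i1 (by rw [Fin.lt_def]; omega)
        · by_cases hk2 : (k : ℕ) = i + 1
          · have hk : k = i1 := Fin.ext hk2
            rw [hk, hfi1]
            simp only [map_add, map_smul, smul_eq_mul]
            rw [horth j i0 (by rw [Fin.lt_def]; omega),
              horth j i1 (by rw [Fin.lt_def]; omega), mul_zero, add_zero]
          · rw [hfother k hk1 hk2]
            exact horth j k hkj
  · intro j
    by_cases hj1 : (j : ℕ) = i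
    · have hj : j = i0 := Fin.ext hj1
      rw [hj, hfi0]; exact hnorm i1
    · by_cases hj2 : (j : ℕ) = i + 1
      · have hj : j = i1 := Fin.ext hj2
        rw [hj, hfi1]
        simp only [map_add, map_smul, LinearMap.add_apply, LinearMap.smul_apply,
          smul_eq_mul]
        rw [hnorm i0, hnorm i1, h01, ← hc, mul_zero, mul_one, add_zero]
        ring_nf
        rw [two, mul_zero, add_zero]
      · rw [hfother j hj1 hj2]; exact hnorm j
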